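/- Let n be an even positive integer, m a positive integer, and x : Fin m → Fin n → ℤ. Then B(x,x) ∈ 2ℤ if and only if ρ(x)·ρ(x) = 0 in ZMod (n+1). -/

import Mathlib

open Finset

/-- The bilinear form of `m` copies of the dual `A_n` root lattice,
written in the dual basis. -/
noncomputable def BA (n m : ℕ) (x y : Fin m → Fin n → ℚ) : ℚ :=
  ∑ i, ((∑ j, x i j * y i j) -
    (1 / ((n : ℚ) + 1)) * (∑ j, x i j) * (∑ j, y i j))

/-- The reduction map to `(ℤ/(n+1)ℤ)^m`. -/
def rhoA (n m : ℕ) (x : Fin m → Fin n → ℤ) : Fin m → ZMod (n + 1) :=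
  fun i => ((∑ j, x i j : ℤ) : ZMod (n + 1))

theorem stmt2 (n m : ℕ) (hn : 0 < n) (heven : Even n) (hm : 0 < m)
    (x : Fin m → Fin n → ℤ) :
    (∃ k : ℤ, ((2 * k : ℤ) : ℚ) =
        BA n m (fun i j => (x i j : ℚ)) (fun i j => (x i j : ℚ))) ↔
      ∑ i, rhoA n m x i * rhoA n m x i = 0 := by
  set S : Fin m → ℤ := fun i => ∑ j, x i j with hS
  set Q : ℤ := ∑ i, ∑ j, x i j * x i j with hQ
  set T : ℤ := ∑ i, S i * S i with hT
  have hn1 : ((n : ℚ) + 1) ≠ 0 := by positivity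
  have hBA : ((n : ℚ) + 1) *
      BA n m (fun i j => (x i j : ℚ)) (fun i j => (x i j : ℚ))
      = ((((n : ℤ) + 1) * Q - T : ℤ) : ℚ) := by
    simp only [BA, hQ, hT, hS]
    push_cast
    rw [Finset.mul_sum, Finset.mul_sum, ← Finset.sum_sub_distrib]
    refine Finset.sum_congr rfl fun i _ => ?_
    field_simp
  have hrho : ∑ i, rhoA n m x i * rhoA n m x i = ((T : ℤ) : ZMod (n + 1)) := by
    simp only [rhoA, hT, hS]
    push_cast
    rfl
  rw [hrho, ZMod.intCast_zmod_eq_zero_iff_dvd]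
  push_cast
  constructor
  · rintro ⟨k, hk⟩
    have h2 : ((n : ℚ) + 1) * (2 * k) = (((n : ℤ) + 1) * Q - T : ℤ) := by
      rw [← hBA, hk]
    have h3 : ((n : ℤ) + 1) * (2 * k) = ((n : ℤ) + 1) * Q - T := by
      exact_mod_cast h2
    exact ⟨Q - 2 * k, by linarith⟩
  · rintro ⟨t, ht⟩
    have hpar : (2 : ℤ) ∣ (Q - t) := by
      have hQT : ((Q : ZMod 2)) = ((T : ZMod 2)) := by
        have hsq : ∀ a : ZMod 2, a * a = a := by decide
        simp only [hQ, hT, hS]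
        push_cast
        simp only [hsq]
      have hTt : ((T : ZMod 2)) = ((t : ZMod 2)) := by
        have : ((n : ZMod 2)) = 0 := by
          rcases heven with ⟨r, hr⟩
          subst hr; push_cast; exact CharTwo.add_self_eq_zero _
        rw [ht]; push_cast [this]; ring
      have : ((Q - t : ℤ) : ZMod 2) = 0 := by push_cast [hQT, hTt]; ring
      exact_mod_cast (ZMod.intCast_zmod_eq_zero_iff_dvd _ 2).mp this
    obtain ⟨k, hk⟩ := hpar
    refine ⟨k, ?_⟩
    have : ((n : ℚ) + 1) * (2 * k) = (((n : ℤ) + 1) * Q - T : ℤ) := by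
      push_cast
      have : (T : ℚ) = ((n : ℚ) + 1) * t := by exact_mod_cast congrArg (Int.cast : ℤ → ℚ) ht
      rw [this]
      have hqk : (Q : ℚ) - t = 2 * k := by exact_mod_cast congrArg (Int.cast : ℤ → ℚ) hk
      nlinarith [hqk]
    rw [← hBA] at this
    exact mul_left_cancel₀ hn1 this
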